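/- Let (Ω, Σ, P) be a probability space with a filtration (𝓕_t)_{t≥0}, and let (V_t), (f_t), (g_t), (h_t), (α_t) be stochastic processes taking values in [0,∞), adapted to (𝓕_t), with each V_t integrable, satisfying E[V_{t+1} | 𝓕_t] ≤ (1 + f_t) V_t + g_t − α_t h_t almost surely for every t. (1) If Σ_{t=0}^∞ f_t < ∞ and Σ_{t=0}^∞ g_t < ∞ almost surely, then (V_t) is bounded almost surely and there exists a random variable W such that V_t → W almost surely. (2) If in addition Σ_{t=0}^∞ α_t = ∞ almost surely, then liminf_{t→∞} h_t = 0 almost surely. -/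

import Mathlib

open MeasureTheory Filter

/-- Discount factor `∏_{s<t} (1+f s)⁻¹`. -/
noncomputable def RSD (f : ℕ → ℝ) (t : ℕ) : ℝ := ∏ s ∈ Finset.range t, (1 + f s)⁻¹

lemma RSD_pos {f : ℕ → ℝ} (hf : ∀ s, 0 ≤ f s) (t : ℕ) : 0 < RSD f t :=
  Finset.prod_pos fun s _ => inv_pos.2 (by linarith [hf s])

lemma RSD_le_one {f : ℕ → ℝ} (hf : ∀ s, 0 ≤ f s) (t : ℕ) : RSD f t ≤ 1 :=
  Finset.prod_le_one (fun s _ => (inv_pos.2 (by linarith [hf s])).le)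
    (fun s _ => inv_le_one_of_one_le₀ (by linarith [hf s]))

lemma RSD_succ (f : ℕ → ℝ) (t : ℕ) : RSD f (t + 1) = RSD f t * (1 + f t)⁻¹ :=
  Finset.prod_range_succ _ _

lemma RSD_succ_mul {f : ℕ → ℝ} (hf : ∀ s, 0 ≤ f s) (t : ℕ) :
    RSD f (t + 1) * (1 + f t) = RSD f t := by
  rw [RSD_succ]
  rw [mul_assoc, inv_mul_cancel₀ (by linarith [hf t] : (1:ℝ) + f t ≠ 0), mul_one]

lemma RSD_anti {f : ℕ → ℝ} (hf : ∀ s, 0 ≤ f s) : Antitone (RSD f) := by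
  refine antitone_nat_of_succ_le fun t => ?_
  rw [RSD_succ]
  nth_rewrite 2 [← mul_one (RSD f t)]
  exact mul_le_mul_of_nonneg_left (inv_le_one_of_one_le₀ (by linarith [hf t])) (RSD_pos hf t).le

lemma RSD_ge_exp {f : ℕ → ℝ} (hf : ∀ s, 0 ≤ f s) (t : ℕ) :
    Real.exp (-∑ s ∈ Finset.range t, f s) ≤ RSD f t := by
  rw [← Finset.sum_neg_distrib, Real.exp_sum]
  refine Finset.prod_le_prod (fun s _ => (Real.exp_pos _).le) fun s _ => ?_
  rw [Real.exp_neg]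
  exact inv_anti₀ (by linarith [hf s]) (by linarith [Real.add_one_le_exp (f s)])

lemma RSD_ge_exp_tsum {f : ℕ → ℝ} (hf : ∀ s, 0 ≤ f s) (hsum : Summable f) (t : ℕ) :
    Real.exp (-∑' s, f s) ≤ RSD f t :=
  le_trans (Real.exp_le_exp.2 (neg_le_neg (Summable.sum_le_tsum _ (fun s _ => hf s) hsum)))
    (RSD_ge_exp hf t)

/-- Deterministic core of Robbins–Siegmund. -/
lemma RS_det {f g V ah : ℕ → ℝ} (hf : ∀ s, 0 ≤ f s) (hg : ∀ s, 0 ≤ g s)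
    (hV : ∀ s, 0 ≤ V s) (hah : ∀ s, 0 ≤ ah s)
    (hfs : Summable f) (hgs : Summable g)
    (hX : ∃ c, Tendsto
      (fun t => RSD f t * V t + ∑ s ∈ Finset.range t, RSD f (s + 1) * (ah s - g s))
      atTop (nhds c)) :
    (∃ L, Tendsto V atTop (nhds L)) ∧ Summable ah := by
  obtain ⟨c, hc⟩ := hX
  set X : ℕ → ℝ := fun t => RSD f t * V t + ∑ s ∈ Finset.range t, RSD f (s + 1) * (ah s - g s)
    with hXdef
  set B : ℕ → ℝ := fun t => ∑ s ∈ Finset.range t, RSD f (s + 1) * g s with hBdef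
  set A : ℕ → ℝ := fun t => ∑ s ∈ Finset.range t, RSD f (s + 1) * ah s with hAdef
  have hABX : ∀ t, X t = RSD f t * V t + A t - B t := by
    intro t
    simp only [hXdef, hAdef, hBdef, mul_sub, Finset.sum_sub_distrib]
    ring
  have hBmono : Monotone B := by
    refine monotone_nat_of_le_succ fun t => ?_
    simp only [hBdef, Finset.sum_range_succ]
    nlinarith [hg t, (RSD_pos hf (t + 1)).le, mul_nonneg (RSD_pos hf (t + 1)).le (hg t)]
  have hBbdd : ∀ t, B t ≤ ∑' s, g s := by
    intro t
    refine le_trans (Finset.sum_le_sum fun s _ => ?_) (Summable.sum_le_tsum _ (fun s _ => hg s) hgs)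
    nth_rewrite 2 [← one_mul (g s)]
    exact mul_le_mul_of_nonneg_right (RSD_le_one hf _) (hg s)
  have hBconv : ∃ b, Tendsto B atTop (nhds b) :=
    ⟨_, tendsto_atTop_ciSup hBmono ⟨_, Set.forall_mem_range.2 hBbdd⟩⟩
  obtain ⟨b, hb⟩ := hBconv
  have hAmono : Monotone A := by
    refine monotone_nat_of_le_succ fun t => ?_
    simp only [hAdef, Finset.sum_range_succ]
    nlinarith [mul_nonneg (RSD_pos hf (t + 1)).le (hah t)]
  have hAle : ∀ t, A t ≤ X t + B t := by
    intro t
    have := mul_nonneg (RSD_pos hf t).le (hV t)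
    rw [hABX t] at *
    linarith
  have hAbdd : BddAbove (Set.range A) := by
    obtain ⟨M, hM⟩ := (hc.add hb).bddAbove_range
    exact ⟨M, Set.forall_mem_range.2 fun t => le_trans (hAle t)
      (hM (Set.mem_range_self t))⟩
  have hAconv : Tendsto A atTop (nhds (⨆ t, A t)) := tendsto_atTop_ciSup hAmono hAbdd
  have hDV : Tendsto (fun t => RSD f t * V t) atTop (nhds (c - (⨆ t, A t) + b)) := by
    refine ((hc.sub hAconv).add hb).congr fun t => ?_
    rw [hABX t]; ring
  have hDanti := RSD_anti hf
  have hDbdd : BddBelow (Set.range (RSD f)) :=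
    ⟨Real.exp (-∑' s, f s), Set.forall_mem_range.2 (RSD_ge_exp_tsum hf hfs)⟩
  have hDconv : Tendsto (RSD f) atTop (nhds (⨅ t, RSD f t)) := tendsto_atTop_ciInf hDanti hDbdd
  have hDpos : 0 < ⨅ t, RSD f t :=
    lt_of_lt_of_le (Real.exp_pos _) (le_ciInf (RSD_ge_exp_tsum hf hfs))
  constructor
  · refine ⟨(c - (⨆ t, A t) + b) / (⨅ t, RSD f t), ?_⟩
    refine (hDV.div hDconv hDpos.ne').congr fun t => ?_
    show RSD f t * V t / RSD f t = V t
    rw [mul_comm, mul_div_assoc, div_self (RSD_pos hf t).ne', mul_one]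
  · obtain ⟨M, hM⟩ := hAbdd
    have hsum1 : Summable (fun s => RSD f (s + 1) * ah s) := by
      refine summable_of_sum_range_le (fun s => mul_nonneg (RSD_pos hf _).le (hah s))
        (fun n => hM (Set.mem_range_self n))
    set e := Real.exp (-∑' s, f s) with he
    have hepos : 0 < e := Real.exp_pos _
    have : Summable (fun s => e * ah s) := by
      refine Summable.of_nonneg_of_le (fun s => mul_nonneg hepos.le (hah s)) (fun s => ?_) hsum1
      exact mul_le_mul_of_nonneg_right (RSD_ge_exp_tsum hf hfs _) (hah s)
    have := this.mul_left e⁻¹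
    simpa [← mul_assoc, inv_mul_cancel₀ hepos.ne'] using this

lemma RS_liminf {α h : ℕ → ℝ} (hα : ∀ s, 0 ≤ α s) (hh : ∀ s, 0 ≤ h s)
    (hsum : Summable (fun s => α s * h s))
    (hdiv : Tendsto (fun n => ∑ t ∈ Finset.range n, α t) atTop atTop) :
    liminf h atTop = 0 := by
  have hkey : ∀ a ∈ {a | ∀ᶠ t in atTop, a ≤ h t}, a ≤ 0 := by
    intro a ha
    by_contra hpos
    push_neg at hpos
    obtain ⟨T, hT⟩ := eventually_atTop.1 ha
    have h1 : Summable (fun n => α (n + T) * h (n + T)) :=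
      (summable_nat_add_iff T).2 hsum
    have h2 : Summable (fun n => a * α (n + T)) := by
      refine Summable.of_nonneg_of_le (fun n => mul_nonneg hpos.le (hα _)) (fun n => ?_) h1
      rw [mul_comm]
      exact mul_le_mul_of_nonneg_left (hT _ (Nat.le_add_left T n)) (hα _)
    have h3 : Summable (fun n => α (n + T)) := by
      have := h2.mul_left a⁻¹
      simpa [← mul_assoc, inv_mul_cancel₀ hpos.ne'] using this
    have h4 : Summable α := (summable_nat_add_iff T).1 h3
    exact (not_tendsto_atTop_of_tendsto_nhds h4.hasSum.tendsto_sum_nat) hdiv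
  have hne : (0 : ℝ) ∈ {a | ∀ᶠ t in atTop, a ≤ h t} := Eventually.of_forall hh
  rw [liminf_eq]
  exact le_antisymm (csSup_le ⟨0, hne⟩ hkey) (le_csSup ⟨0, hkey⟩ hne)

section PW
variable {Ω : Type*}

/-- The "good event" up to time `t` for level `N`. -/
def RSC (f g : ℕ → Ω → ℝ) (N t : ℕ) : Set Ω :=
  {ω | (∑ s ∈ Finset.range (t + 1), f s ω) ≤ N ∧ (∑ s ∈ Finset.range (t + 1), g s ω) ≤ N}

/-- Increment of the normalized process. -/
noncomputable def RSinc (V f g h α : ℕ → Ω → ℝ) (s : ℕ) : Ω → ℝ := fun ω =>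
  RSD (fun u => f u ω) (s + 1) * V (s + 1) ω - RSD (fun u => f u ω) s * V s ω
    + RSD (fun u => f u ω) (s + 1) * (α s ω * h s ω - g s ω)

/-- The normalized process. -/
noncomputable def RSX (V f g h α : ℕ → Ω → ℝ) (t : ℕ) : Ω → ℝ := fun ω =>
  RSD (fun u => f u ω) t * V t ω
    + ∑ s ∈ Finset.range t, RSD (fun u => f u ω) (s + 1) * (α s ω * h s ω - g s ω)

/-- The stopped normalized process. -/
noncomputable def RSY (V f g h α : ℕ → Ω → ℝ) (N t : ℕ) : Ω → ℝ := fun ω =>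
  V 0 ω + ∑ s ∈ Finset.range t, Set.indicator (RSC f g N s) (RSinc V f g h α s) ω

lemma RSC_antitone {f g : ℕ → Ω → ℝ} (hf : ∀ t ω, 0 ≤ f t ω) (hg : ∀ t ω, 0 ≤ g t ω)
    (N : ℕ) {s t : ℕ} (hst : s ≤ t) : RSC f g N t ⊆ RSC f g N s := by
  intro ω hω
  obtain ⟨h1, h2⟩ := hω
  constructor
  · exact le_trans (Finset.sum_le_sum_of_subset_of_nonneg
      (Finset.range_subset_range.2 (by omega)) (fun i _ _ => hf i ω)) h1
  · exact le_trans (Finset.sum_le_sum_of_subset_of_nonneg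
      (Finset.range_subset_range.2 (by omega)) (fun i _ _ => hg i ω)) h2

lemma RSX_succ {V f g h α : ℕ → Ω → ℝ} (t : ℕ) (ω : Ω) :
    RSX V f g h α (t + 1) ω = RSX V f g h α t ω + RSinc V f g h α t ω := by
  simp only [RSX, RSinc, Finset.sum_range_succ]
  ring

lemma RSY_succ {V f g h α : ℕ → Ω → ℝ} (N t : ℕ) (ω : Ω) :
    RSY V f g h α N (t + 1) ω = RSY V f g h α N t ω
      + Set.indicator (RSC f g N t) (RSinc V f g h α t) ω := by
  simp only [RSY, Finset.sum_range_succ]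
  ring

lemma RSY_eq_RSX {V f g h α : ℕ → Ω → ℝ} {N t : ℕ} {ω : Ω}
    (hc : ∀ s < t, ω ∈ RSC f g N s) : RSY V f g h α N t ω = RSX V f g h α t ω := by
  induction t with
  | zero => simp [RSY, RSX, RSD]
  | succ t ih =>
    rw [RSY_succ, RSX_succ, ih (fun s hs => hc s (by omega)),
      Set.indicator_of_mem (hc t (by omega))]

lemma RSY_stop {V f g h α : ℕ → Ω → ℝ} (hf : ∀ t ω, 0 ≤ f t ω) (hg : ∀ t ω, 0 ≤ g t ω)
    (N : ℕ) (t : ℕ) (ω : Ω) :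
    ∃ m ≤ t, (∀ s < m, ω ∈ RSC f g N s) ∧ RSY V f g h α N t ω = RSY V f g h α N m ω := by
  induction t with
  | zero => exact ⟨0, le_rfl, by omega, rfl⟩
  | succ t ih =>
    by_cases hall : ∀ s < t + 1, ω ∈ RSC f g N s
    · exact ⟨t + 1, le_rfl, hall, rfl⟩
    · push_neg at hall
      obtain ⟨s, hs, hns⟩ := hall
      obtain ⟨m, hm, hcm, hYm⟩ := ih
      have hnt : ω ∉ RSC f g N t := fun hmem =>
        hns (RSC_antitone hf hg N (by omega) hmem)
      refine ⟨m, by omega, hcm, ?_⟩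
      rw [RSY_succ, Set.indicator_of_notMem hnt, add_zero, hYm]

lemma RSY_ge {V f g h α : ℕ → Ω → ℝ} (hV : ∀ t ω, 0 ≤ V t ω) (hf : ∀ t ω, 0 ≤ f t ω)
    (hg : ∀ t ω, 0 ≤ g t ω) (hh : ∀ t ω, 0 ≤ h t ω) (hα : ∀ t ω, 0 ≤ α t ω)
    (N : ℕ) (t : ℕ) (ω : Ω) : -(N : ℝ) ≤ RSY V f g h α N t ω := by
  obtain ⟨m, hm, hcm, hYm⟩ := RSY_stop (V := V) (h := h) (α := α) hf hg N t ω
  rw [hYm, RSY_eq_RSX hcm]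
  have hfw : ∀ s, 0 ≤ f s ω := fun s => hf s ω
  have h1 : ∀ s ∈ Finset.range m,
      -(RSD (fun u => f u ω) (s + 1) * g s ω) ≤
        RSD (fun u => f u ω) (s + 1) * (α s ω * h s ω - g s ω) := by
    intro s _
    have := mul_nonneg (mul_nonneg (hα s ω) (hh s ω)) (RSD_pos hfw (s + 1)).le
    nlinarith
  have h2 : ∀ s ∈ Finset.range m, -(g s ω) ≤ -(RSD (fun u => f u ω) (s + 1) * g s ω) := by
    intro s _
    have h3 : RSD (fun u => f u ω) (s + 1) * g s ω ≤ 1 * g s ω :=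
      mul_le_mul_of_nonneg_right (RSD_le_one hfw _) (hg s ω)
    rw [one_mul] at h3
    linarith
  have h4 : -(N : ℝ) ≤ ∑ s ∈ Finset.range m, -(g s ω) := by
    rw [show (∑ s ∈ Finset.range m, -g s ω) = -∑ s ∈ Finset.range m, g s ω by
      rw [← Finset.sum_neg_distrib], neg_le_neg_iff]
    rcases Nat.eq_zero_or_pos m with hm0 | hm0
    · simp [hm0]
    · obtain ⟨k, rfl⟩ := Nat.exists_eq_add_of_lt hm0
      simp only [zero_add] at *
      exact (hcm k (by omega)).2
  calc -(N : ℝ) ≤ ∑ s ∈ Finset.range m, -(g s ω) := h4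
    _ ≤ ∑ s ∈ Finset.range m, -(RSD (fun u => f u ω) (s + 1) * g s ω) :=
        Finset.sum_le_sum h2
    _ ≤ ∑ s ∈ Finset.range m, RSD (fun u => f u ω) (s + 1) * (α s ω * h s ω - g s ω) :=
        Finset.sum_le_sum h1
    _ ≤ RSX V f g h α m ω := by
        have := mul_nonneg (RSD_pos hfw m).le (hV m ω)
        simp only [RSX]
        linarith

end PW

theorem stmt_10 {Ω : Type*} {mΩ : MeasurableSpace Ω} (P : Measure Ω)
    [IsProbabilityMeasure P] (𝓕 : Filtration ℕ mΩ)
    (V f g h α : ℕ → Ω → ℝ)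
    (hVnn : ∀ t ω, 0 ≤ V t ω) (hfnn : ∀ t ω, 0 ≤ f t ω)
    (hgnn : ∀ t ω, 0 ≤ g t ω) (hhnn : ∀ t ω, 0 ≤ h t ω)
    (hαnn : ∀ t ω, 0 ≤ α t ω)
    (hVadp : StronglyAdapted 𝓕 V) (hfadp : StronglyAdapted 𝓕 f)
    (hgadp : StronglyAdapted 𝓕 g) (hhadp : StronglyAdapted 𝓕 h) (hαadp : StronglyAdapted 𝓕 α)
    (hVint : ∀ t, Integrable (V t) P)
    (hineq : ∀ t, ∀ᵐ ω ∂P,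
      (P[V (t + 1)|𝓕 t]) ω ≤ (1 + f t ω) * V t ω + g t ω - α t ω * h t ω)
    (hf : ∀ᵐ ω ∂P, Summable (fun t => f t ω))
    (hg : ∀ᵐ ω ∂P, Summable (fun t => g t ω)) :
    ((∀ᵐ ω ∂P, BddAbove (Set.range fun t => V t ω)) ∧
      ∃ W : Ω → ℝ, ∀ᵐ ω ∂P, Tendsto (fun t => V t ω) atTop (nhds (W ω))) ∧
    ((∀ᵐ ω ∂P, Tendsto (fun n => ∑ t ∈ Finset.range n, α t ω) atTop atTop) →
      ∀ᵐ ω ∂P, Filter.liminf (fun t => h t ω) atTop = 0) := by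
  classical
  -- measurability of the discount factor
  have hDmeas : ∀ n t, t ≤ n + 1 → Measurable[𝓕 n] (fun ω => RSD (fun u => f u ω) t) := by
    intro n t ht
    have : ∀ s ∈ Finset.range t, Measurable[𝓕 n] (fun ω => (1 + f s ω)⁻¹) := by
      intro s hs
      have hs' : s ≤ n := by simp only [Finset.mem_range] at hs; omega
      exact (measurable_const.add ((hfadp s).measurable.mono (𝓕.mono hs') le_rfl)).inv
    exact Finset.measurable_prod _ this
  have hprocmeas : ∀ (p : ℕ → Ω → ℝ), StronglyAdapted 𝓕 p → ∀ s n, s ≤ n →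
      Measurable[𝓕 n] (p s) := fun p hp s n hsn =>
    (hp s).measurable.mono (𝓕.mono hsn) le_rfl
  -- measurability of the good events
  have hCmeas : ∀ N t, MeasurableSet[𝓕 t] (RSC f g N t) := by
    intro N t
    have hfm : Measurable[𝓕 t] (fun ω => ∑ s ∈ Finset.range (t + 1), f s ω) :=
      Finset.measurable_sum _ (fun s hs => hprocmeas f hfadp s t
        (by simp only [Finset.mem_range] at hs; omega))
    have hgm : Measurable[𝓕 t] (fun ω => ∑ s ∈ Finset.range (t + 1), g s ω) :=
      Finset.measurable_sum _ (fun s hs => hprocmeas g hgadp s t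
        (by simp only [Finset.mem_range] at hs; omega))
    have : RSC f g N t = {ω | (∑ s ∈ Finset.range (t + 1), f s ω) ≤ N}
        ∩ {ω | (∑ s ∈ Finset.range (t + 1), g s ω) ≤ N} := rfl
    rw [this]
    exact (measurableSet_le hfm measurable_const).inter (measurableSet_le hgm measurable_const)
  -- measurability of increments
  have hincMeas : ∀ N s n, s + 1 ≤ n →
      Measurable[𝓕 n] (Set.indicator (RSC f g N s) (RSinc V f g h α s)) := by
    intro N s n hsn
    refine Measurable.indicator ?_ (𝓕.mono (by omega : s ≤ n) _ (hCmeas N s))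
    exact (((hDmeas n (s + 1) (by omega)).mul (hprocmeas V hVadp (s + 1) n hsn)).sub
      ((hDmeas n s (by omega)).mul (hprocmeas V hVadp s n (by omega)))).add
      ((hDmeas n (s + 1) (by omega)).mul
        (((hprocmeas α hαadp s n (by omega)).mul (hprocmeas h hhadp s n (by omega))).sub
          (hprocmeas g hgadp s n (by omega))))
  -- the a.e. bound on α h
  have hαhbound : ∀ t, ∀ᵐ ω ∂P, α t ω * h t ω ≤ (1 + f t ω) * V t ω + g t ω := by
    intro t
    have h0 : 0 ≤ᵐ[P] V (t + 1) := Eventually.of_forall (hVnn (t + 1))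
    filter_upwards [hineq t, condExp_nonneg (m := 𝓕 t) h0] with ω h1 h2
    have : (0 : ℝ) ≤ (P[V (t + 1)|𝓕 t]) ω := h2
    linarith
  -- basic facts about membership in the good event
  have hmemf : ∀ N s (ω : Ω), ω ∈ RSC f g N s → f s ω ≤ N := by
    intro N s ω hω
    refine le_trans ?_ hω.1
    exact Finset.single_le_sum (fun i _ => hfnn i ω) (Finset.self_mem_range_succ s)
  have hmemg : ∀ N s (ω : Ω), ω ∈ RSC f g N s → g s ω ≤ N := by
    intro N s ω hω
    refine le_trans ?_ hω.2
    exact Finset.single_le_sum (fun i _ => hgnn i ω) (Finset.self_mem_range_succ s)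
  have hfw : ∀ ω s, (0:ℝ) ≤ f s ω := fun ω s => hfnn s ω
  have hDpos : ∀ (ω : Ω) t, 0 < RSD (fun u => f u ω) t := fun ω t => RSD_pos (hfw ω) t
  have hDle1 : ∀ (ω : Ω) t, RSD (fun u => f u ω) t ≤ 1 := fun ω t => RSD_le_one (hfw ω) t
  -- integrability of the pieces
  have hint1 : ∀ N s, Integrable
      (Set.indicator (RSC f g N s) (fun ω => RSD (fun u => f u ω) (s + 1) * V (s + 1) ω)) P := by
    intro N s
    refine Integrable.mono' (hVint (s + 1)) ?_ (Eventually.of_forall fun ω => ?_)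
    · refine ((Measurable.indicator ((hDmeas (s + 1) (s + 1) (by omega)).mul
        (hprocmeas V hVadp (s + 1) (s + 1) le_rfl))
        (hCmeas N s |> 𝓕.mono (by omega : s ≤ s + 1) _)).mono (𝓕.le (s + 1))
          le_rfl).aestronglyMeasurable
    · by_cases hω : ω ∈ RSC f g N s
      · rw [Set.indicator_of_mem hω, Real.norm_eq_abs,
          abs_of_nonneg (mul_nonneg (hDpos ω _).le (hVnn _ ω))]
        nth_rewrite 2 [← one_mul (V (s + 1) ω)]
        exact mul_le_mul_of_nonneg_right (hDle1 ω _) (hVnn _ ω)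
      · rw [Set.indicator_of_notMem hω]
        simpa using hVnn (s + 1) ω
  have hint2 : ∀ N s, Integrable
      (Set.indicator (RSC f g N s) (fun ω => RSD (fun u => f u ω) s * V s ω)) P := by
    intro N s
    refine Integrable.mono' (hVint s) ?_ (Eventually.of_forall fun ω => ?_)
    · refine ((Measurable.indicator ((hDmeas s s (by omega)).mul
        (hprocmeas V hVadp s s le_rfl)) (hCmeas N s)).mono (𝓕.le s)
          le_rfl).aestronglyMeasurable
    · by_cases hω : ω ∈ RSC f g N s
      · rw [Set.indicator_of_mem hω, Real.norm_eq_abs,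
          abs_of_nonneg (mul_nonneg (hDpos ω _).le (hVnn _ ω))]
        nth_rewrite 2 [← one_mul (V s ω)]
        exact mul_le_mul_of_nonneg_right (hDle1 ω _) (hVnn _ ω)
      · rw [Set.indicator_of_notMem hω]
        simpa using hVnn s ω
  have hint3 : ∀ N s, Integrable
      (Set.indicator (RSC f g N s) (fun ω => RSD (fun u => f u ω) (s + 1) * g s ω)) P := by
    intro N s
    refine Integrable.mono' (integrable_const (N : ℝ)) ?_ (Eventually.of_forall fun ω => ?_)
    · refine ((Measurable.indicator ((hDmeas s (s + 1) (by omega)).mul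
        (hprocmeas g hgadp s s le_rfl)) (hCmeas N s)).mono (𝓕.le s)
          le_rfl).aestronglyMeasurable
    · by_cases hω : ω ∈ RSC f g N s
      · rw [Set.indicator_of_mem hω, Real.norm_eq_abs,
          abs_of_nonneg (mul_nonneg (hDpos ω _).le (hgnn _ ω))]
        calc RSD (fun u => f u ω) (s + 1) * g s ω ≤ 1 * g s ω :=
              mul_le_mul_of_nonneg_right (hDle1 ω _) (hgnn _ ω)
          _ = g s ω := one_mul _
          _ ≤ N := hmemg N s ω hω
      · rw [Set.indicator_of_notMem hω]
        simp [Nat.cast_nonneg]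
  have hint4 : ∀ N s, Integrable
      (Set.indicator (RSC f g N s) (fun ω => RSD (fun u => f u ω) (s + 1) * (α s ω * h s ω))) P := by
    intro N s
    have hdom : Integrable (fun ω => (1 + (N : ℝ)) * V s ω + N) P :=
      ((hVint s).const_mul _).add (integrable_const _)
    refine Integrable.mono' hdom ?_ ?_
    · refine ((Measurable.indicator ((hDmeas s (s + 1) (by omega)).mul
        ((hprocmeas α hαadp s s le_rfl).mul (hprocmeas h hhadp s s le_rfl)))
        (hCmeas N s)).mono (𝓕.le s) le_rfl).aestronglyMeasurable
    · filter_upwards [hαhbound s] with ω hb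
      by_cases hω : ω ∈ RSC f g N s
      · rw [Set.indicator_of_mem hω, Real.norm_eq_abs,
          abs_of_nonneg (mul_nonneg (hDpos ω _).le (mul_nonneg (hαnn _ ω) (hhnn _ ω)))]
        have e1 : RSD (fun u => f u ω) (s + 1) * (α s ω * h s ω) ≤ 1 * (α s ω * h s ω) :=
          mul_le_mul_of_nonneg_right (hDle1 ω _) (mul_nonneg (hαnn _ ω) (hhnn _ ω))
        have e2 : (1 + f s ω) * V s ω ≤ (1 + (N : ℝ)) * V s ω :=
          mul_le_mul_of_nonneg_right (by linarith [hmemf N s ω hω]) (hVnn _ ω)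
        have e3 := hmemg N s ω hω
        nlinarith
      · rw [Set.indicator_of_notMem hω]
        have := mul_nonneg (by positivity : (0:ℝ) ≤ 1 + (N:ℝ)) (hVnn s ω)
        simp only [norm_zero]
        positivity
  -- decomposition of the increment
  have hind_eq : ∀ N s, Set.indicator (RSC f g N s) (RSinc V f g h α s)
      = fun ω => Set.indicator (RSC f g N s)
          (fun ω => RSD (fun u => f u ω) (s + 1) * V (s + 1) ω) ω
        - Set.indicator (RSC f g N s) (fun ω => RSD (fun u => f u ω) s * V s ω) ω
        + (Set.indicator (RSC f g N s)
            (fun ω => RSD (fun u => f u ω) (s + 1) * (α s ω * h s ω)) ω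
          - Set.indicator (RSC f g N s) (fun ω => RSD (fun u => f u ω) (s + 1) * g s ω) ω) := by
    intro N s
    funext ω
    by_cases hω : ω ∈ RSC f g N s
    · simp only [Set.indicator_of_mem hω, RSinc]
      ring
    · simp [Set.indicator_of_notMem hω]
  have hintInc : ∀ N s, Integrable (Set.indicator (RSC f g N s) (RSinc V f g h α s)) P := by
    intro N s
    rw [hind_eq N s]
    exact (((hint1 N s).sub (hint2 N s)).add ((hint4 N s).sub (hint3 N s)))
  -- integrability and adaptedness of Y
  have hYint : ∀ N t, Integrable (RSY V f g h α N t) P := by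
    intro N t
    exact (hVint 0).add (integrable_finset_sum _ (fun s _ => hintInc N s))
  have hYadp : ∀ N, StronglyAdapted 𝓕 (RSY V f g h α N) := by
    intro N t
    refine Measurable.stronglyMeasurable ?_
    refine (hprocmeas V hVadp 0 t (by omega)).add ?_
    refine Finset.measurable_sum _ (fun s hs => ?_)
    exact hincMeas N s t (by simp only [Finset.mem_range] at hs; omega)
  -- the supermartingale property
  have hsuperineq : ∀ N t, P[RSY V f g h α N (t + 1)|𝓕 t] ≤ᵐ[P] RSY V f g h α N t := by
    intro N t
    set C := RSC f g N t with hC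
    set q : Ω → ℝ := Set.indicator C (fun ω => RSD (fun u => f u ω) (t + 1)) with hq
    set r : Ω → ℝ := Set.indicator C (fun ω =>
      -(RSD (fun u => f u ω) t * V t ω)
        + RSD (fun u => f u ω) (t + 1) * (α t ω * h t ω - g t ω)) with hr
    have hqmeas : StronglyMeasurable[𝓕 t] q :=
      ((hDmeas t (t + 1) (by omega)).indicator (hCmeas N t)).stronglyMeasurable
    have hrmeas : StronglyMeasurable[𝓕 t] r := by
      refine Measurable.stronglyMeasurable ?_
      refine Measurable.indicator ?_ (hCmeas N t)
      exact (((hDmeas t t (by omega)).mul (hprocmeas V hVadp t t le_rfl)).neg).add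
        ((hDmeas t (t + 1) (by omega)).mul
          (((hprocmeas α hαadp t t le_rfl).mul (hprocmeas h hhadp t t le_rfl)).sub
            (hprocmeas g hgadp t t le_rfl)))
    have hqV_eq : (q * V (t + 1)) = fun ω => Set.indicator C
        (fun ω => RSD (fun u => f u ω) (t + 1) * V (t + 1) ω) ω := by
      funext ω
      by_cases hω : ω ∈ C
      · simp [hq, Set.indicator_of_mem hω]
      · simp [hq, Set.indicator_of_notMem hω]
    have hqVint : Integrable (q * V (t + 1)) P := by
      rw [hqV_eq]; exact hint1 N t
    have hr_eq : r = fun ω =>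
        -(Set.indicator C (fun ω => RSD (fun u => f u ω) t * V t ω) ω)
        + (Set.indicator C (fun ω => RSD (fun u => f u ω) (t + 1) * (α t ω * h t ω)) ω
          - Set.indicator C (fun ω => RSD (fun u => f u ω) (t + 1) * g t ω) ω) := by
      funext ω
      by_cases hω : ω ∈ C
      · simp only [hr, Set.indicator_of_mem hω]
        ring
      · simp [hr, Set.indicator_of_notMem hω]
    have hrint : Integrable r P := by
      rw [hr_eq]
      exact ((hint2 N t).neg).add ((hint4 N t).sub (hint3 N t))
    have hdecomp : RSY V f g h α N (t + 1) = RSY V f g h α N t + (q * V (t + 1) + r) := by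
      funext ω
      rw [Pi.add_apply, Pi.add_apply, RSY_succ, ← hC]
      congr 1
      by_cases hω : ω ∈ C
      · simp only [Set.indicator_of_mem hω, hq, hr, Pi.mul_apply, RSinc]
        ring
      · simp [Set.indicator_of_notMem hω, hq, hr]
    have step1 : P[RSY V f g h α N (t + 1)|𝓕 t]
        =ᵐ[P] P[RSY V f g h α N t|𝓕 t] + P[q * V (t + 1) + r|𝓕 t] := by
      rw [hdecomp]
      exact condExp_add (hYint N t) (hqVint.add hrint) _
    have step2 : P[q * V (t + 1) + r|𝓕 t] =ᵐ[P] P[q * V (t + 1)|𝓕 t] + P[r|𝓕 t] :=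
      condExp_add hqVint hrint _
    have step3 : P[q * V (t + 1)|𝓕 t] =ᵐ[P] q * P[V (t + 1)|𝓕 t] :=
      condExp_mul_of_stronglyMeasurable_left hqmeas hqVint (hVint (t + 1))
    have step4 : P[r|𝓕 t] = r := condExp_of_stronglyMeasurable (𝓕.le t) hrmeas hrint
    have step5 : P[RSY V f g h α N t|𝓕 t] = RSY V f g h α N t :=
      condExp_of_stronglyMeasurable (𝓕.le t) (hYadp N t) (hYint N t)
    filter_upwards [step1, step2, step3, hineq t] with ω e1 e2 e3 e4
    rw [e1, Pi.add_apply, e2, Pi.add_apply, e3, step4, step5, Pi.mul_apply]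
    by_cases hω : ω ∈ C
    · have hqω : q ω = RSD (fun u => f u ω) (t + 1) := Set.indicator_of_mem hω _
      have hrω : r ω = -(RSD (fun u => f u ω) t * V t ω)
          + RSD (fun u => f u ω) (t + 1) * (α t ω * h t ω - g t ω) :=
        Set.indicator_of_mem hω _
      rw [hqω, hrω]
      have hd := (hDpos ω (t + 1)).le
      have h5 := RSD_succ_mul (hfw ω) t
      have h6 : RSD (fun u => f u ω) (t + 1) * ((P[V (t + 1)|𝓕 t]) ω)
          ≤ RSD (fun u => f u ω) (t + 1)
            * ((1 + f t ω) * V t ω + g t ω - α t ω * h t ω) :=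
        mul_le_mul_of_nonneg_left e4 hd
      have h7 : RSD (fun u => f u ω) (t + 1) * (1 + f t ω) * V t ω
          = RSD (fun u => f u ω) t * V t ω := by rw [h5]
      nlinarith [h6, h7]
    · have hqω : q ω = 0 := Set.indicator_of_notMem hω _
      have hrω : r ω = 0 := Set.indicator_of_notMem hω _
      rw [hqω, hrω]
      simp
  have hsuper : ∀ N, Supermartingale (RSY V f g h α N) 𝓕 P := fun N =>
    supermartingale_nat (hYadp N) (hYint N) (hsuperineq N)
  -- L¹ bound
  have hYbdd : ∀ N t, eLpNorm (RSY V f g h α N t) 1 P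
      ≤ ENNReal.ofReal (∫ ω, V 0 ω ∂P + 2 * N) := by
    intro N t
    have hYle : ∫ ω, RSY V f g h α N t ω ∂P ≤ ∫ ω, V 0 ω ∂P := by
      have hmono := (hsuper N).2.1 0 t (Nat.zero_le t)
      have hY0 : RSY V f g h α N 0 = V 0 := by
        funext ω; simp [RSY]
      calc ∫ ω, RSY V f g h α N t ω ∂P
          = ∫ ω, (P[RSY V f g h α N t|𝓕 0]) ω ∂P :=
            (integral_condExp (𝓕.le 0)).symm
        _ ≤ ∫ ω, RSY V f g h α N 0 ω ∂P :=
            integral_mono_ae integrable_condExp (hYint N 0) hmono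
        _ = ∫ ω, V 0 ω ∂P := by rw [hY0]
    have habs : ∀ ω, ‖RSY V f g h α N t ω‖ ≤ RSY V f g h α N t ω + 2 * N := by
      intro ω
      have hge := RSY_ge hVnn hfnn hgnn hhnn hαnn N t ω
      rw [Real.norm_eq_abs]
      rcases abs_cases (RSY V f g h α N t ω) with ⟨he, _⟩ | ⟨he, _⟩ <;>
        · rw [he]
          have : (0:ℝ) ≤ N := Nat.cast_nonneg N
          linarith
    have hnorm : ∫ ω, ‖RSY V f g h α N t ω‖ ∂P ≤ ∫ ω, V 0 ω ∂P + 2 * N := by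
      have hi1 : Integrable (fun ω => RSY V f g h α N t ω + 2 * N) P :=
        (hYint N t).add (integrable_const _)
      calc ∫ ω, ‖RSY V f g h α N t ω‖ ∂P
          ≤ ∫ ω, (RSY V f g h α N t ω + 2 * N) ∂P :=
            integral_mono_ae (hYint N t).norm hi1 (Eventually.of_forall habs)
        _ = ∫ ω, RSY V f g h α N t ω ∂P + 2 * N := by
            rw [integral_add (hYint N t) (integrable_const _), integral_const]
            simp
        _ ≤ ∫ ω, V 0 ω ∂P + 2 * N := by linarith
    calc eLpNorm (RSY V f g h α N t) 1 P
        = ENNReal.ofReal (∫ ω, ‖RSY V f g h α N t ω‖ ∂P) := by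
          rw [eLpNorm_one_eq_lintegral_enorm,
            ← ofReal_integral_norm_eq_lintegral_enorm (hYint N t)]
      _ ≤ ENNReal.ofReal (∫ ω, V 0 ω ∂P + 2 * N) := ENNReal.ofReal_le_ofReal hnorm
  -- a.e. convergence of the stopped process
  have hconv : ∀ N : ℕ, ∀ᵐ ω ∂P, ∃ c, Tendsto (fun t => RSY V f g h α N t ω)
      atTop (nhds c) := by
    intro N
    set R : NNReal := (∫ ω, V 0 ω ∂P + 2 * N).toNNReal with hR
    have hsub : Submartingale (-(RSY V f g h α N)) 𝓕 P := (hsuper N).neg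
    have hbdd : ∀ n, eLpNorm ((-(RSY V f g h α N)) n) 1 P ≤ (R : ENNReal) := by
      intro n
      have : (-(RSY V f g h α N)) n = -(RSY V f g h α N n) := rfl
      rw [this, eLpNorm_neg]
      exact le_trans (hYbdd N n) le_rfl
    filter_upwards [hsub.exists_ae_tendsto_of_bdd hbdd] with ω hcc
    obtain ⟨c, hc⟩ := hcc
    refine ⟨-c, ?_⟩
    have : (fun t => RSY V f g h α N t ω) = fun t => -(-(RSY V f g h α N) t ω) := by
      funext t; simp
    rw [this]
    exact hc.neg
  -- the main a.e. event
  have hmain : ∀ᵐ ω ∂P, (∃ L, Tendsto (fun t => V t ω) atTop (nhds L))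
      ∧ Summable (fun s => α s ω * h s ω) := by
    filter_upwards [hf, hg, ae_all_iff.2 hconv] with ω h1 h2 h3
    obtain ⟨N, hN⟩ := exists_nat_ge (max (∑' t, f t ω) (∑' t, g t ω))
    have hmem : ∀ s, ω ∈ RSC f g N s := by
      intro s
      constructor
      · exact le_trans (Summable.sum_le_tsum _ (fun u _ => hfnn u ω) h1)
          (le_trans (le_max_left _ _) hN)
      · exact le_trans (Summable.sum_le_tsum _ (fun u _ => hgnn u ω) h2)
          (le_trans (le_max_right _ _) hN)
    obtain ⟨c, hc⟩ := h3 N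
    have hXc : Tendsto (fun t => RSX V f g h α t ω) atTop (nhds c) :=
      hc.congr (fun t => RSY_eq_RSX (fun s _ => hmem s))
    exact RS_det (fun s => hfnn s ω) (fun s => hgnn s ω) (fun s => hVnn s ω)
      (fun s => mul_nonneg (hαnn s ω) (hhnn s ω)) h1 h2 ⟨c, hXc⟩
  refine ⟨⟨?_, ?_⟩, ?_⟩
  · filter_upwards [hmain] with ω hω
    obtain ⟨L, hL⟩ := hω.1
    exact hL.bddAbove_range
  · refine ⟨fun ω => limUnder atTop (fun t => V t ω), ?_⟩
    filter_upwards [hmain] with ω hω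
    obtain ⟨L, hL⟩ := hω.1
    rwa [hL.limUnder_eq]
  · intro hαdiv
    filter_upwards [hmain, hαdiv] with ω hω hαω
    exact RS_liminf (fun s => hαnn s ω) (fun s => hhnn s ω) hω.2 hαω
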